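/- Let H be a self-adjoint operator on a Hilbert space 𝔥 and K a Hilbert–Schmidt operator with K = Kᵀ. Suppose the block operator A = [[H, K],[K*, JHJ*]] on 𝔥 ⊕ 𝔥* satisfies A ≥ η > 0 (J being the canonical conjugation). Then for every unit vector u ∈ 𝔥, ⟨u, Hu⟩ ≥ |⟨Ju, Ku⟩| + η. -/

import Mathlib

/-- Non-degeneracy of the block operator `A = [[H, K], [K*, JHJ*]] ≥ η > 0` on `𝔥 ⊕ 𝔥*`
(the dual `𝔥*` being identified with `𝔥` through the canonical conjugation `J`) implies
`⟨u, Hu⟩ ≥ |⟨Ju, Ku⟩| + η` for every unit vector `u`.  The positivity of `A` is expressed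
through its quadratic form on pairs `(u, Jv)`, and `K = Kᵀ` through the symmetry of the
bilinear form `(u,v) ↦ ⟨Ju, Kv⟩`. -/
theorem stmt15 {𝔥 : Type*} [NormedAddCommGroup 𝔥] [InnerProductSpace ℂ 𝔥] [CompleteSpace 𝔥]
    (H K : 𝔥 →L[ℂ] 𝔥) (J : 𝔥 → 𝔥) (η : ℝ) (hη : 0 < η)
    (hH : IsSelfAdjoint H)
    (hJadd : ∀ u v, J (u + v) = J u + J v)
    (hJsmul : ∀ (c : ℂ) (u : 𝔥), J (c • u) = (starRingEnd ℂ) c • J u)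
    (hJinner : ∀ u v : 𝔥, (inner ℂ (J u) (J v) : ℂ) = inner ℂ v u)
    (hJJ : ∀ u, J (J u) = u)
    (hKsymm : ∀ u v : 𝔥, (inner ℂ (J u) (K v) : ℂ) = inner ℂ (J v) (K u))
    (hpos : ∀ u v : 𝔥, η * (‖u‖^2 + ‖v‖^2)
      ≤ (inner ℂ u (H u) : ℂ).re + (inner ℂ v (H v) : ℂ).re + 2 * (inner ℂ (J u) (K v) : ℂ).re) :
    ∀ u : 𝔥, ‖u‖ = 1 → ‖(inner ℂ (J u) (K u) : ℂ)‖ + η ≤ (inner ℂ u (H u) : ℂ).re := by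

  intro u hu
  set z : ℂ := (inner ℂ (J u) (K u) : ℂ) with hz
  rcases eq_or_ne z 0 with h0 | h0
  · have h := hpos u u
    rw [hu, ← hz, h0] at h
    simp only [Complex.zero_re, mul_zero, add_zero, one_pow] at h
    rw [h0, norm_zero, zero_add]
    nlinarith
  · have habsz : (0:ℝ) < ‖z‖ := by
      simpa using norm_pos_iff.mpr h0
    set c : ℂ := -(starRingEnd ℂ z) / ((‖z‖ : ℝ) : ℂ) with hc
    have habs : ‖c‖ = 1 := by
      rw [hc, norm_div, norm_neg, Complex.norm_conj, Complex.norm_real,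
        norm_norm, div_self habsz.ne']
    have hcz : c * z = -((‖z‖ : ℝ) : ℂ) := by
      rw [hc, div_mul_eq_mul_div, neg_mul, Complex.conj_mul',
        ← Complex.ofReal_pow, ← Complex.ofReal_neg, ← Complex.ofReal_div]
      norm_cast
      rw [neg_div, sq, mul_div_assoc, div_self habsz.ne', mul_one]
    have h := hpos u (c • u)
    have hnv : ‖c • u‖ = 1 := by
      rw [norm_smul, hu, mul_one, habs]
    have hKv : (inner ℂ (J u) (K (c • u)) : ℂ) = c * z := by
      rw [map_smul, inner_smul_right, hz]
    have hHv : (inner ℂ (c • u) (H (c • u)) : ℂ) = inner ℂ u (H u) := by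
      rw [map_smul, inner_smul_right, inner_smul_left, ← mul_assoc,
        Complex.mul_conj, Complex.normSq_eq_norm_sq, habs]
      simp
    rw [hu, hnv, hKv, hHv, hcz] at h
    simp only [Complex.neg_re, Complex.ofReal_re, one_pow] at h
    nlinarith
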